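/- For every d ≥ 2, every k ≥ 2, and every p ≥ 1: Σ_{v ∈ F_d^{np}} #{(i_1,…,i_p) ∈ {1,…,2d}^p : g_{i_1}⋯g_{i_p} = v^k in F_d} ≤ (p+1)^4·(2√(2d−1))^p. -/

import Mathlib

open MeasureTheory Filter Topology
set_option maxHeartbeats 1000000
set_option synthInstance.maxHeartbeats 400000
noncomputable section
namespace SC

/-! ## Probability setup: tuples of i.i.d. uniform random permutations -/

instance (N : ℕ) : MeasurableSpace (Equiv.Perm (Fin N)) := ⊤

/-- The uniform probability measure on `d`-tuples of permutations of `N` letters,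
modelling `d` i.i.d. uniformly random permutations. -/
def unifPerms (N d : ℕ) : Measure (Fin d → Equiv.Perm (Fin N)) :=
  have : Nonempty (Equiv.Perm (Fin N)) := ⟨1⟩
  (PMF.uniformOfFintype _).toMeasure

/-- `ℂ^N` as a Hilbert space. -/
def Euc (N : ℕ) : Type := EuclideanSpace ℂ (Fin N)

instance (N : ℕ) : NormedAddCommGroup (Euc N) :=
  inferInstanceAs (NormedAddCommGroup (EuclideanSpace ℂ (Fin N)))
instance (N : ℕ) : InnerProductSpace ℂ (Euc N) :=
  inferInstanceAs (InnerProductSpace ℂ (EuclideanSpace ℂ (Fin N)))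
instance (N : ℕ) : FiniteDimensional ℂ (Euc N) :=
  inferInstanceAs (FiniteDimensional ℂ (EuclideanSpace ℂ (Fin N)))

/-- The all-ones vector `1_N ∈ ℂ^N`. -/
def ones (N : ℕ) : Euc N := (WithLp.equiv 2 _).symm (fun _ => 1)

/-- The subspace `{1_N}ᗮ ⊆ ℂ^N`. -/
def flatV (N : ℕ) : Submodule ℂ (Euc N) := (ℂ ∙ (ones N))ᗮ

/-- The unitary operator on `ℂ^N` induced by a permutation (the permutation matrix). -/
def permOp (N : ℕ) (σ : Equiv.Perm (Fin N)) : Euc N →L[ℂ] Euc N :=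
  ((LinearIsometryEquiv.piLpCongrLeft 2 ℂ ℂ σ).toLinearIsometry.toContinuousLinearMap :
    EuclideanSpace ℂ (Fin N) →L[ℂ] EuclideanSpace ℂ (Fin N))

/-- Compression of an operator to a (complete) subspace `V`; for an invariant subspace this
is the restriction `T|_V`. -/
def restrictTo {E : Type*} [NormedAddCommGroup E] [InnerProductSpace ℂ E]
    (V : Submodule ℂ E) [CompleteSpace V] (T : E →L[ℂ] E) : V →L[ℂ] V :=
  (V.orthogonalProjectionOnto).comp (T.comp V.subtypeL)

/-- `S_i^N`: the restriction of the `i`-th random permutation matrix to `{1_N}ᗮ`. -/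
def SOp (N d : ℕ) (σ : Fin d → Equiv.Perm (Fin N)) (i : Fin d) :
    ↥(flatV N) →L[ℂ] ↥(flatV N) :=
  restrictTo (flatV N) (permOp N (σ i))

/-- `A^N = S_1^N + S_1^{N*} + ⋯ + S_d^N + S_d^{N*}`: the adjacency matrix of the permutation
model of a random `2d`-regular graph on `N` vertices, restricted to `{1_N}ᗮ`. -/
def AOp (N d : ℕ) (σ : Fin d → Equiv.Perm (Fin N)) : ↥(flatV N) →L[ℂ] ↥(flatV N) :=
  ∑ i : Fin d, (SOp N d σ i + star (SOp N d σ i))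

end SC
/-! ## Noncommutative polynomials with matrix coefficients, and their evaluation -/

namespace SC

/-- A noncommutative `*`-polynomial in `d` variables with `D × D` matrix coefficients:
a finitely supported assignment of a matrix coefficient `A_w` to each word `w` in the
letters `s_1, …, s_d, s_1^*, …, s_d^*` (a letter `(i, false)` is `s_i`, and `(i, true)`
is `s_i^*`). -/
abbrev NCPoly (d D : ℕ) := (List (Fin d × Bool)) →₀ Matrix (Fin D) (Fin D) ℂ

/-- The formal adjoint of a word. -/
def wordStar {d : ℕ} (w : List (Fin d × Bool)) : List (Fin d × Bool) :=
  (w.map fun l => (l.1, !l.2)).reverse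

/-- The formal adjoint of a noncommutative polynomial. -/
def polyStar {d D : ℕ} (P : NCPoly d D) : NCPoly d D :=
  Finsupp.mapDomain wordStar (P.mapRange Matrix.conjTranspose (by simp))

variable {H : Type*} [NormedAddCommGroup H] [InnerProductSpace ℂ H] [CompleteSpace H]

/-- Evaluation of a word at a `d`-tuple of operators (`(i, false) ↦ u i`,
`(i, true) ↦ (u i)^*`), multiplied in the order in which the letters appear. -/
def wordEval {d : ℕ} (u : Fin d → H →L[ℂ] H) (w : List (Fin d × Bool)) : H →L[ℂ] H :=
  (w.map fun l => if l.2 then star (u l.1) else u l.1).prod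

/-- `Hᴰ` with its Hilbert space structure; operators on it model `M_D(ℂ) ⊗ B(H)`. -/
def Ten (D : ℕ) (H : Type*) : Type _ := PiLp 2 (fun _ : Fin D => H)

instance (D : ℕ) : NormedAddCommGroup (Ten D H) :=
  inferInstanceAs (NormedAddCommGroup (PiLp 2 (fun _ : Fin D => H)))
instance (D : ℕ) : InnerProductSpace ℂ (Ten D H) :=
  inferInstanceAs (InnerProductSpace ℂ (PiLp 2 (fun _ : Fin D => H)))
instance (D : ℕ) [CompleteSpace H] : CompleteSpace (Ten D H) :=
  inferInstanceAs (CompleteSpace (PiLp 2 (fun _ : Fin D => H)))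

/-- The operator `A ⊗ T` on `Hᴰ`, for a `D × D` matrix `A` and an operator `T` on `H`. -/
def matTensor {D : ℕ} (A : Matrix (Fin D) (Fin D) ℂ) (T : H →L[ℂ] H) :
    Ten D H →L[ℂ] Ten D H :=
  ((((PiLp.continuousLinearEquiv 2 ℂ (fun _ : Fin D => H)).symm :
      (∀ _ : Fin D, H) →L[ℂ] PiLp 2 (fun _ : Fin D => H)).comp
    (((ContinuousLinearMap.pi fun i : Fin D =>
        ∑ j : Fin D, A i j • (T.comp (ContinuousLinearMap.proj j))) :
        (∀ _ : Fin D, H) →L[ℂ] ∀ _ : Fin D, H).comp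
      ((PiLp.continuousLinearEquiv 2 ℂ (fun _ : Fin D => H)) :
        PiLp 2 (fun _ : Fin D => H) →L[ℂ] ∀ _ : Fin D, H))) :
    PiLp 2 (fun _ : Fin D => H) →L[ℂ] PiLp 2 (fun _ : Fin D => H))

/-- Evaluation `P(u, u^*) = Σ_w A_w ⊗ w(u, u^*)` of a noncommutative polynomial at a
`d`-tuple of operators on `H`, as an operator on `Hᴰ`. -/
def polyEval {d D : ℕ} (P : NCPoly d D) (u : Fin d → H →L[ℂ] H) :
    Ten D H →L[ℂ] Ten D H :=
  P.sum fun w A => matTensor A (wordEval u w)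

/-- The norm `‖P‖_{M_D(ℂ) ⊗ C*(F_d)}`: the supremum of `‖P(U, U^*)‖` over all `d`-tuples
of unitary matrices of any dimension. -/
def cstarNorm {d D : ℕ} (P : NCPoly d D) : ℝ :=
  ⨆ n : ℕ, ⨆ U : Fin d → Matrix.unitaryGroup (Fin n) ℂ,
    ‖polyEval (H := EuclideanSpace ℂ (Fin n)) P
      (fun i => Matrix.toEuclideanCLM (𝕜 := ℂ) (U i : Matrix (Fin n) (Fin n) ℂ))‖

end SC

/-! ## The left regular representation of the free group on `ℓ²(F_d)` -/

namespace SC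

/-- Composition with (the inverse of) a bijection of index sets, as a map of `ℓ²` spaces. -/
def lpShift {α β : Type*} (e : α ≃ β) (f : lp (fun _ : α => ℂ) 2) :
    lp (fun _ : β => ℂ) 2 :=
  ⟨fun b => f (e.symm b), by
    refine memℓp_gen ?_
    have hf : Summable fun a => ‖f a‖ ^ ENNReal.toReal 2 :=
      (memℓp_gen_iff (by norm_num)).mp (lp.memℓp f)
    exact (Equiv.summable_iff e.symm).mpr hf⟩

/-- Composition with (the inverse of) a bijection of index sets, as a linear isometry of
`ℓ²` spaces. -/
def lpCongr {α β : Type*} (e : α ≃ β) :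
    lp (fun _ : α => ℂ) 2 →ₗᵢ[ℂ] lp (fun _ : β => ℂ) 2 where
  toFun := lpShift e
  map_add' f g := by
    apply Subtype.ext
    funext b
    simp only [lpShift, lp.coeFn_add, Pi.add_apply]
  map_smul' c f := by
    apply Subtype.ext
    funext b
    simp only [lpShift, lp.coeFn_smul, Pi.smul_apply, RingHom.id_apply]
  norm_map' f := by
    show ‖lpShift e f‖ = ‖f‖
    rw [lp.norm_eq_tsum_rpow (by norm_num) f, lp.norm_eq_tsum_rpow (by norm_num) (lpShift e f)]
    congr 1
    exact Equiv.tsum_eq e.symm (fun a => ‖f a‖ ^ ENNReal.toReal 2)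

/-- `ℓ²(F_d)`. -/
def L2F (d : ℕ) : Type := lp (fun _ : FreeGroup (Fin d) => ℂ) 2

instance (d : ℕ) : NormedAddCommGroup (L2F d) :=
  inferInstanceAs (NormedAddCommGroup (lp (fun _ : FreeGroup (Fin d) => ℂ) 2))
instance (d : ℕ) : InnerProductSpace ℂ (L2F d) :=
  inferInstanceAs (InnerProductSpace ℂ (lp (fun _ : FreeGroup (Fin d) => ℂ) 2))
instance (d : ℕ) : CompleteSpace (L2F d) :=
  inferInstanceAs (CompleteSpace (lp (fun _ : FreeGroup (Fin d) => ℂ) 2))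

/-- The left regular representation: `λ(g) δ_h = δ_{gh}`, i.e. `(λ(g) f)(h) = f(g⁻¹ h)`,
as a bounded operator on `ℓ²(F_d)`. -/
def leftRegOp {d : ℕ} (g : FreeGroup (Fin d)) : L2F d →L[ℂ] L2F d :=
  ((lpCongr (Equiv.mulLeft g)).toContinuousLinearMap :
    lp (fun _ : FreeGroup (Fin d) => ℂ) 2 →L[ℂ] lp (fun _ : FreeGroup (Fin d) => ℂ) 2)

/-- The free generators `s_i := λ(g_i)` of the free group factor. -/
def sTuple (d : ℕ) : Fin d → (L2F d →L[ℂ] L2F d) := fun i => leftRegOp (FreeGroup.of i)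

/-- `δ_e ∈ ℓ²(F_d)`. -/
def deltaE (d : ℕ) : L2F d :=
  (lp.single 2 (1 : FreeGroup (Fin d)) (1 : ℂ) : lp (fun _ : FreeGroup (Fin d) => ℂ) 2)

/-- The canonical trace `τ(a) = ⟨δ_e, a δ_e⟩` on `B(ℓ²(F_d))`. -/
def tauState {d : ℕ} (T : L2F d →L[ℂ] L2F d) : ℂ :=
  inner ℂ (deltaE d) (T (deltaE d))

/-- The `i`-th canonical basis vector tensored with `δ_e`, in `(ℓ²(F_d))ᴰ`. -/
def basTen (d D : ℕ) (i : Fin D) : Ten D (L2F d) :=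
  (WithLp.equiv 2 (∀ _ : Fin D, L2F d)).symm (fun j => if j = i then deltaE d else 0)

/-- The trace `tr_D ⊗ τ` on `M_D(ℂ) ⊗ B(ℓ²(F_d))`. -/
def trDtau {d D : ℕ} (Y : Ten D (L2F d) →L[ℂ] Ten D (L2F d)) : ℂ :=
  (D : ℂ)⁻¹ * ∑ i : Fin D, (inner ℂ (basTen d D i) (Y (basTen d D i)) : ℂ)

end SC

/-! ## Smooth functions, `C^m` norms, and compactly supported distributions -/

namespace SC

/-- The space of `C^∞` functions `ℝ → ℝ`, as a subspace of `ℝ → ℝ`. -/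
def SmoothR : Submodule ℝ (ℝ → ℝ) where
  carrier := {f | ContDiff ℝ (⊤ : ℕ∞) f}
  add_mem' := fun {a b} (hf : ContDiff ℝ (⊤ : ℕ∞) a) (hg : ContDiff ℝ (⊤ : ℕ∞) b) => hf.add hg
  zero_mem' := show ContDiff ℝ (⊤ : ℕ∞) (0 : ℝ → ℝ) from contDiff_const
  smul_mem' := fun c f (hf : ContDiff ℝ (⊤ : ℕ∞) f) => hf.const_smul c

lemma mem_SmoothR {f : ℝ → ℝ} : f ∈ SmoothR ↔ ContDiff ℝ (⊤ : ℕ∞) f := Iff.rfl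

/-- `sup_{x ∈ [a, b]} |f x|`. -/
def supAbsOn (a b : ℝ) (f : ℝ → ℝ) : ℝ := ⨆ x : Set.Icc a b, |f (x : ℝ)|

/-- The `C^m` norm `‖f‖_{C^m[-K, K]} = Σ_{j=0}^m sup_{x ∈ [-K, K]} |f^{(j)}(x)|`. -/
def CmNorm (m : ℕ) (K : ℝ) (f : ℝ → ℝ) : ℝ :=
  ∑ j ∈ Finset.range (m + 1), supAbsOn (-K) K (iteratedDeriv j f)

/-- A linear functional on `C^∞(ℝ)` is a compactly supported distribution if it satisfies
`|ν(f)| ≤ c ‖f‖_{C^m[-K, K]}` for some `c, K > 0` and `m ∈ ℤ_+`. -/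
def IsCSDist (ν : ↥SmoothR →ₗ[ℝ] ℝ) : Prop :=
  ∃ (c K : ℝ) (m : ℕ), 0 < c ∧ 0 < K ∧ ∀ f : ↥SmoothR, |ν f| ≤ c * CmNorm m K (f : ℝ → ℝ)

/-- `f` vanishes on a neighborhood of `A`. -/
def VanishesNear (f : ℝ → ℝ) (A : Set ℝ) : Prop :=
  ∃ U : Set ℝ, IsOpen U ∧ A ⊆ U ∧ ∀ x ∈ U, f x = 0

/-- `supp ν ⊆ A`: the distribution `ν` kills every smooth function vanishing on a
neighborhood of `A`. -/
def SuppSubset (ν : ↥SmoothR →ₗ[ℝ] ℝ) (A : Set ℝ) : Prop :=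
  ∀ f : ↥SmoothR, VanishesNear (f : ℝ → ℝ) A → ν f = 0

/-- The monomial `x ↦ x^p` as a smooth function. -/
def monomial (p : ℕ) : ↥SmoothR := ⟨fun x => x ^ p, mem_SmoothR.mpr (contDiff_id.pow p)⟩

/-- A real polynomial, as a smooth function. -/
def polySmooth (h : Polynomial ℝ) : ↥SmoothR :=
  ⟨fun x => h.eval x, mem_SmoothR.mpr (by
    induction h using Polynomial.induction_on' with
    | add p q hp hq => simpa using hp.add hq
    | monomial n a =>
        simpa [Polynomial.eval_monomial] using contDiff_const.mul (contDiff_id.pow n))⟩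

/-- The `L^β` norm of `g` on `[0, 2π]`. -/
def lpNormOn (β : ℝ) (g : ℝ → ℝ) : ℝ :=
  (∫ θ in (0 : ℝ)..(2 * Real.pi), |g θ| ^ β) ^ (1 / β)

/-- `sup_{x ∈ [-K, K]} |h(x)|` for a polynomial `h`. -/
def C0normPoly (K : ℝ) (h : Polynomial ℝ) : ℝ := supAbsOn (-K) K (fun x => h.eval x)

end SC

/-! ## Words in the letters `g_0, g_1, …, g_d, g_1⁻¹, …, g_d⁻¹` and word counts -/

namespace SC

/-- The letter `g_j` (for `0 ≤ j ≤ 2d`): `g_0 = e`, `g_i = `the `i`-th free generator for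
`1 ≤ i ≤ d`, and `g_{d+i} = g_i⁻¹`, as an element of the free group `F_d`. -/
def letterGrp (d : ℕ) (j : Fin (2 * d + 1)) : FreeGroup (Fin d) :=
  if h : (j : ℕ) = 0 then 1
  else if h2 : (j : ℕ) ≤ d then FreeGroup.of ⟨(j : ℕ) - 1, by omega⟩
  else (FreeGroup.of ⟨(j : ℕ) - 1 - d, by have := j.isLt; omega⟩)⁻¹

/-- The reduction in `F_d` of a word in the letters `g_0, …, g_{2d}`. -/
def wordGrp (d : ℕ) (w : List (Fin (2 * d + 1))) : FreeGroup (Fin d) :=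
  (w.map (letterGrp d)).prod

/-- The letter `g_j`, substituted by the corresponding restricted permutation matrix:
`g_0 ↦ 1`, `g_i ↦ S_i^N` and `g_{d+i} ↦ S_i^{N*} = (S_i^N)⁻¹` for `1 ≤ i ≤ d`. -/
def letterOp (N d : ℕ) (σ : Fin d → Equiv.Perm (Fin N)) (j : Fin (2 * d + 1)) :
    ↥(flatV N) →L[ℂ] ↥(flatV N) :=
  if h : (j : ℕ) = 0 then 1
  else if h2 : (j : ℕ) ≤ d then SOp N d σ ⟨(j : ℕ) - 1, by omega⟩
  else star (SOp N d σ ⟨(j : ℕ) - 1 - d, by have := j.isLt; omega⟩)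

/-- `w(S^N)`: a word in the letters `g_0, …, g_{2d}`, evaluated at the restricted random
permutation matrices (multiplied in the order in which the letters appear in `w`). -/
def wordOpFull (N d : ℕ) (σ : Fin d → Equiv.Perm (Fin N)) (w : List (Fin (2 * d + 1))) :
    ↥(flatV N) →L[ℂ] ↥(flatV N) :=
  (w.map (letterOp N d σ)).prod

/-- `v ∈ F_d` is a non-power: `v ≠ e` and `v` is not a proper power `u^k`, `k ≥ 2`. -/
def NonPower {d : ℕ} (v : FreeGroup (Fin d)) : Prop :=
  v ≠ 1 ∧ ∀ (u : FreeGroup (Fin d)) (k : ℕ), 2 ≤ k → v ≠ u ^ k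

/-- The letter `g_j` for `j ∈ {1, …, 2d}` (first the `d` generators, then their inverses). -/
def gen2d (d : ℕ) (j : Fin (2 * d)) : FreeGroup (Fin d) :=
  if h : (j : ℕ) < d then FreeGroup.of ⟨(j : ℕ), h⟩
  else (FreeGroup.of ⟨(j : ℕ) - d, by have := j.isLt; omega⟩)⁻¹

/-- The number of `p`-tuples `(i_1, …, i_p) ∈ {1, …, 2d}^p` with `g_{i_1} ⋯ g_{i_p} = x`
in `F_d`. -/
def wordCount (d p : ℕ) (x : FreeGroup (Fin d)) : ℕ :=
  Set.ncard {t : Fin p → Fin (2 * d) | (List.ofFn fun i => gen2d d (t i)).prod = x}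

/-- The polynomial `g_q(x) = Π_{j=1}^{q-1} (1 - jx)^{d_j}`, `d_j = min(d, ⌊q/(j+1)⌋)`. -/
def gPoly (d q : ℕ) : Polynomial ℝ :=
  ∏ j ∈ Finset.Icc 1 (q - 1),
    ((1 : Polynomial ℝ) - (j : ℝ) • Polynomial.X) ^ (min d (q / (j + 1)))

/-- The normalized expected trace `E[tr_N w(S^N)]` (trace normalized by `N`). -/
def expTrWord (N d : ℕ) (w : List (Fin (2 * d + 1))) : ℂ :=
  ∫ σ, (N : ℂ)⁻¹ * LinearMap.trace ℂ ↥(flatV N) (wordOpFull N d σ w : ↥(flatV N) →ₗ[ℂ] ↥(flatV N))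
    ∂(unifPerms N d)

end SC

/-! ## Expected traces of functions of `P(S^N, S^{N*})` -/

namespace SC

/-- `tr` of a linear endomorphism of `(ℂ^N ⊖ 1_N)ᴰ`. -/
def trTen (N D : ℕ) (T : Ten D ↥(flatV N) →L[ℂ] Ten D ↥(flatV N)) : ℂ :=
  LinearMap.trace ℂ (Ten D ↥(flatV N)) (T : Ten D ↥(flatV N) →ₗ[ℂ] Ten D ↥(flatV N))

/-- `E[tr_{DN} h(P(S^N, S^{N*}))]` for a real polynomial test function `h` (the polynomial
functional calculus; the trace is normalized by `DN`). -/
def expTrPoly (N d D : ℕ) (P : NCPoly d D) (h : Polynomial ℝ) : ℂ :=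
  ∫ σ, ((D : ℂ) * (N : ℂ))⁻¹ *
      trTen N D (Polynomial.aeval (polyEval P (SOp N d σ)) (h.map (algebraMap ℝ ℂ)))
    ∂(unifPerms N d)

/-- `E[tr_{DN} h(P(S^N, S^{N*}))]` for a test function `h : ℝ → ℝ` (continuous functional
calculus; the trace is normalized by `DN`). -/
def expTrSmooth (N d D : ℕ) (P : NCPoly d D) (h : ℝ → ℝ) : ℂ :=
  ∫ σ, ((D : ℂ) * (N : ℂ))⁻¹ * trTen N D (cfc h (polyEval P (SOp N d σ))) ∂(unifPerms N d)

/-- `(tr_D ⊗ τ)(h(P(s, s^*)))` for a real polynomial test function `h`. -/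
def limTrPoly (d D : ℕ) (P : NCPoly d D) (h : Polynomial ℝ) : ℂ :=
  trDtau (Polynomial.aeval (polyEval P (sTuple d)) (h.map (algebraMap ℝ ℂ)))

/-- `E[tr_N (A^N)^p]`. -/
def expTrA (N d p : ℕ) : ℂ :=
  ∫ σ, (N : ℂ)⁻¹ *
      LinearMap.trace ℂ ↥(flatV N) ((AOp N d σ ^ p : ↥(flatV N) →L[ℂ] ↥(flatV N)) :
        ↥(flatV N) →ₗ[ℂ] ↥(flatV N))
    ∂(unifPerms N d)

/-- `ρ_m` from the staircase theorem. -/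
def rho (d m : ℕ) : ℝ :=
  if (2 * (m : ℝ) - 1) ≤ Real.sqrt (2 * d - 1) then 2 * Real.sqrt (2 * d - 1)
  else (2 * (m : ℝ) - 1) + (2 * (d : ℝ) - 1) / (2 * (m : ℝ) - 1)

/-- `m_* = ⌊(√(2d-1) + 1)/2⌋`, the largest `m` with `2m - 1 ≤ √(2d-1)`. -/
def mStar (d : ℕ) : ℕ := ⌊(Real.sqrt (2 * d - 1) + 1) / 2⌋₊

/-- The degree of a noncommutative polynomial is at most `q₀`. -/
def DegLE {d D : ℕ} (P : NCPoly d D) (q₀ : ℕ) : Prop :=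
  ∀ w ∈ P.support, w.length ≤ q₀

end SC


namespace SC
namespace Aux

open FreeGroup List

variable {d : ℕ}

/-- Two adjacent letters cancel. -/
def Canc (a b : Fin d × Bool) : Prop := a.1 = b.1 ∧ a.2 = !b.2

lemma canc_iff {a b : Fin d × Bool} : Canc a b ↔ b = (a.1, !a.2) := by
  constructor
  · rintro ⟨h1, h2⟩
    obtain ⟨a1, a2⟩ := a; obtain ⟨b1, b2⟩ := b
    simp only [Prod.mk.injEq]
    simp only at h1 h2
    exact ⟨h1.symm, by rw [h2, Bool.not_not]⟩
  · rintro rfl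
    exact ⟨rfl, by simp⟩

/-- A word is reduced. -/
def IsRed (l : List (Fin d × Bool)) : Prop := l.Chain' fun a b => ¬ Canc a b

lemma reduce_eq_self_of_isRed : ∀ {l : List (Fin d × Bool)}, IsRed l → reduce l = l := by
  intro l
  induction l with
  | nil => intro _; rfl
  | cons a t ih =>
    intro h
    have ht : IsRed t := h.tail
    rw [reduce.cons, ih ht]
    cases t with
    | nil => rfl
    | cons b t' =>
      have hab : ¬ Canc a b := (List.isChain_cons_cons.1 h).1
      show (if a.1 = b.1 ∧ a.2 = !b.2 then t' else a :: b :: t') = a :: b :: t'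
      rw [if_neg]
      exact hab

lemma isRed_reduce (l : List (Fin d × Bool)) : IsRed (reduce l) := by
  refine (List.isChain_isInfix (reduce l)).imp ?_
  rintro a b ⟨s, t, hst⟩ hc
  rw [canc_iff] at hc
  subst hc
  have : reduce l = s ++ (a.1, a.2) :: (a.1, !a.2) :: t := by
    simpa using hst.symm
  exact reduce.not this

lemma isRed_toWord (x : FreeGroup (Fin d)) : IsRed x.toWord := by
  rw [← reduce_toWord]; exact isRed_reduce _

lemma norm_def (x : FreeGroup (Fin d)) : norm x = x.toWord.length := rfl

lemma toWord_letter_mul_of_head (l : Fin d × Bool) (x : FreeGroup (Fin d))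
    (h : ∀ b ∈ x.toWord.head?, ¬ Canc l b) :
    (FreeGroup.mk [l] * x).toWord = l :: x.toWord := by
  conv_lhs => rw [← mk_toWord (x := x), mul_mk]
  rw [toWord_mk, List.singleton_append, reduce.cons, reduce_toWord]
  cases hxw : x.toWord with
  | nil => rfl
  | cons b t =>
    have hb : ¬ Canc l b := by apply h; rw [hxw]; rfl
    show (if l.1 = b.1 ∧ l.2 = !b.2 then t else l :: b :: t) = l :: b :: t
    rw [if_neg]
    exact hb

lemma toWord_letter_mul_cancel (l : Fin d × Bool) (x : FreeGroup (Fin d))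
    {t : List (Fin d × Bool)} (h : x.toWord = (l.1, !l.2) :: t) :
    (FreeGroup.mk [l] * x).toWord = t := by
  conv_lhs => rw [← mk_toWord (x := x), mul_mk]
  rw [toWord_mk, List.singleton_append, reduce.cons, reduce_toWord, h]
  simp

lemma norm_letter_mul_of_head (l : Fin d × Bool) (x : FreeGroup (Fin d))
    (h : ∀ b ∈ x.toWord.head?, ¬ Canc l b) :
    norm (FreeGroup.mk [l] * x) = norm x + 1 := by
  rw [norm_def, norm_def, toWord_letter_mul_of_head l x h, List.length_cons]

lemma norm_letter_mul_cancel (l : Fin d × Bool) (x : FreeGroup (Fin d))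
    {t : List (Fin d × Bool)} (h : x.toWord = (l.1, !l.2) :: t) :
    norm (FreeGroup.mk [l] * x) + 1 = norm x := by
  rw [norm_def, norm_def, toWord_letter_mul_cancel l x h, h, List.length_cons]

/-! ### wordCount recursion -/

lemma wordCount_eq_natCard (d p : ℕ) (x : FreeGroup (Fin d)) :
    wordCount d p x =
      Nat.card {t : Fin p → Fin (2 * d) // (List.ofFn fun i => gen2d d (t i)).prod = x} :=
  (Nat.card_coe_set_eq _).symm

lemma wordCount_zero (d : ℕ) (x : FreeGroup (Fin d)) :
    wordCount d 0 x = if x = 1 then 1 else 0 := by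
  rw [wordCount_eq_natCard]
  have hofn : ∀ t : Fin 0 → Fin (2 * d), (List.ofFn fun i => gen2d d (t i)).prod = (1 : FreeGroup (Fin d)) := by
    intro t; simp
  split_ifs with h
  · subst h
    have : ∀ t : Fin 0 → Fin (2 * d), (List.ofFn fun i => gen2d d (t i)).prod = (1 : FreeGroup (Fin d)) := hofn
    rw [Nat.card_eq_one_iff_unique]
    refine ⟨⟨?_⟩, ⟨⟨fun i => i.elim0, hofn _⟩⟩⟩
    rintro ⟨t1, _⟩ ⟨t2, _⟩
    apply Subtype.ext
    funext i
    exact i.elim0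
  · have : IsEmpty {t : Fin 0 → Fin (2 * d) // (List.ofFn fun i => gen2d d (t i)).prod = x} := by
      constructor
      rintro ⟨t, ht⟩
      rw [hofn t] at ht
      exact h ht.symm
    exact Nat.card_of_isEmpty

/-- The letter such that `(gen2d d j)⁻¹ = mk [letterOf j]`. -/
def letterOf {d : ℕ} (j : Fin (2 * d)) : Fin d × Bool :=
  if h : (j : ℕ) < d then (⟨(j : ℕ), h⟩, false)
  else (⟨(j : ℕ) - d, by have := j.isLt; omega⟩, true)

lemma of_eq_mk (a : Fin d) : FreeGroup.of a = FreeGroup.mk [(a, true)] := rfl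

lemma inv_gen2d (j : Fin (2 * d)) : (gen2d d j)⁻¹ = FreeGroup.mk [letterOf j] := by
  unfold gen2d letterOf
  split_ifs with h
  · rw [of_eq_mk, inv_mk]
    simp [invRev]
  · rw [of_eq_mk, inv_inv]

lemma letterOf_bijective (d : ℕ) : Function.Bijective (letterOf (d := d)) := by
  constructor
  · intro j1 j2 hj
    have h1 := j1.isLt; have h2 := j2.isLt
    unfold letterOf at hj
    split_ifs at hj with ha hb hb
    · rw [Prod.mk.injEq] at hj
      have := congrArg Fin.val hj.1
      simp only at this
      exact Fin.ext this
    · rw [Prod.mk.injEq] at hj; exact absurd hj.2 (by simp)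
    · rw [Prod.mk.injEq] at hj; exact absurd hj.2 (by simp)
    · rw [Prod.mk.injEq] at hj
      have := congrArg Fin.val hj.1
      simp only at this
      exact Fin.ext (by omega)
  · rintro ⟨a, b⟩
    have ha := a.isLt
    cases b
    · refine ⟨⟨(a : ℕ), by omega⟩, ?_⟩
      unfold letterOf
      rw [dif_pos (by simpa using ha)]
    · refine ⟨⟨d + (a : ℕ), by omega⟩, ?_⟩
      unfold letterOf
      rw [dif_neg (by simp)]
      rw [Prod.mk.injEq]
      exact ⟨Fin.ext (by simp), rfl⟩

lemma wordCount_succ (d p : ℕ) (x : FreeGroup (Fin d)) :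
    wordCount d (p + 1) x = ∑ l : Fin d × Bool, wordCount d p (FreeGroup.mk [l] * x) := by
  classical
  rw [wordCount_eq_natCard]
  have E : {t : Fin (p + 1) → Fin (2 * d) // (List.ofFn fun i => gen2d d (t i)).prod = x} ≃
      Σ j : Fin (2 * d), {t : Fin p → Fin (2 * d) //
        (List.ofFn fun i => gen2d d (t i)).prod = (gen2d d j)⁻¹ * x} := by
    refine Equiv.trans (Equiv.subtypeEquiv (Fin.consEquiv fun _ : Fin (p + 1) => Fin (2 * d)).symm ?_)
      (Equiv.subtypeProdEquivSigmaSubtype _)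
    intro t
    have : (List.ofFn fun i => gen2d d (t i)).prod
        = gen2d d (t 0) * (List.ofFn fun i : Fin p => gen2d d (t i.succ)).prod := by
      rw [List.ofFn_succ]; rfl
    rw [this]
    show _ ↔ (List.ofFn fun i : Fin p => gen2d d ((((Fin.consEquiv fun _ : Fin (p + 1) => Fin (2 * d)).symm) t).2 i)).prod = _
    have h2 : ∀ i : Fin p, (((Fin.consEquiv fun _ : Fin (p + 1) => Fin (2 * d)).symm) t).2 i = t i.succ := fun i => rfl
    simp only [h2]
    have h1 : (((Fin.consEquiv fun _ : Fin (p + 1) => Fin (2 * d)).symm) t).1 = t 0 := rfl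
    rw [h1]
    exact ⟨fun h => eq_inv_mul_iff_mul_eq.2 h, fun h => by rw [h, mul_inv_cancel_left]⟩
  rw [Nat.card_congr E]
  haveI : ∀ j : Fin (2 * d), Fintype {t : Fin p → Fin (2 * d) //
      (List.ofFn fun i => gen2d d (t i)).prod = (gen2d d j)⁻¹ * x} := fun j => Fintype.ofFinite _
  rw [Nat.card_eq_fintype_card, Fintype.card_sigma]
  refine Fintype.sum_bijective _ (letterOf_bijective d) _ _ ?_
  intro j
  show Fintype.card _ = wordCount d p (FreeGroup.mk [letterOf j] * x)
  rw [wordCount_eq_natCard, ← inv_gen2d, Nat.card_eq_fintype_card]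

lemma norm_gen2d_le (d : ℕ) (j : Fin (2 * d)) : norm (gen2d d j) ≤ 1 := by
  unfold gen2d
  split_ifs with h
  · rw [norm_of]
  · rw [norm_inv_eq, norm_of]

lemma wordCount_eq_zero_of_lt (d p : ℕ) (x : FreeGroup (Fin d)) (h : p < norm x) :
    wordCount d p x = 0 := by
  rw [wordCount_eq_natCard]
  have : IsEmpty {t : Fin p → Fin (2 * d) // (List.ofFn fun i => gen2d d (t i)).prod = x} := by
    constructor
    rintro ⟨t, ht⟩
    have hlen : ∀ L : List (FreeGroup (Fin d)), (∀ g ∈ L, norm g ≤ 1) → norm L.prod ≤ L.length := by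
      intro L
      induction L with
      | nil => intro _; simp [FreeGroup.norm_one]
      | cons g L ih =>
        intro hg
        rw [List.prod_cons, List.length_cons]
        calc norm (g * L.prod) ≤ norm g + norm L.prod := norm_mul_le _ _
        _ ≤ 1 + L.length := by
            have := ih (fun g' hg' => hg g' (List.mem_cons_of_mem _ hg'))
            have := hg g List.mem_cons_self
            omega
        _ = L.length + 1 := by omega
    have := hlen (List.ofFn fun i => gen2d d (t i)) (by
      intro g hg
      obtain ⟨i, rfl⟩ := List.mem_ofFn.1 hg
      exact norm_gen2d_le d _)
    rw [ht, List.length_ofFn] at this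
    omega
  exact Nat.card_of_isEmpty

/-! ### The walk-count bound (Lemma W) -/

lemma sqrt_ge_one {d : ℕ} (hd : 1 ≤ d) : 1 ≤ Real.sqrt (2 * (d : ℝ) - 1) := by
  have h1 : (1 : ℝ) ≤ 2 * (d : ℝ) - 1 := by
    have : (1 : ℝ) ≤ (d : ℝ) := by exact_mod_cast hd
    linarith
  calc (1 : ℝ) = Real.sqrt 1 := by simp
    _ ≤ Real.sqrt (2 * (d : ℝ) - 1) := Real.sqrt_le_sqrt h1

lemma sq_sqrt' {d : ℕ} (hd : 1 ≤ d) :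
    Real.sqrt (2 * (d : ℝ) - 1) * Real.sqrt (2 * (d : ℝ) - 1) = 2 * (d : ℝ) - 1 := by
  apply Real.mul_self_sqrt
  have : (1 : ℝ) ≤ (d : ℝ) := by exact_mod_cast hd
  linarith

lemma lemmaW {d : ℕ} (hd : 1 ≤ d) (p : ℕ) (x : FreeGroup (Fin d)) :
    (wordCount d p x : ℝ) * Real.sqrt (2 * (d : ℝ) - 1) ^ (norm x) ≤
      2 ^ p * Real.sqrt (2 * (d : ℝ) - 1) ^ p := by
  set s : ℝ := Real.sqrt (2 * (d : ℝ) - 1) with hs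
  have hs1 : 1 ≤ s := sqrt_ge_one hd
  have hs0 : 0 < s := lt_of_lt_of_le one_pos hs1
  have hssq : s * s = 2 * (d : ℝ) - 1 := sq_sqrt' hd
  induction p generalizing x with
  | zero =>
    rw [wordCount_zero]
    split_ifs with h
    · subst h
      rw [FreeGroup.norm_one]
      norm_num
    · simp only [Nat.cast_zero, zero_mul]
      positivity
  | succ p ih =>
    rw [wordCount_succ]
    push_cast
    rw [Finset.sum_mul]
    by_cases hx : x = 1
    · subst hx
      have hb : ∀ l : Fin d × Bool,
          (wordCount d p (FreeGroup.mk [l] * 1) : ℝ) * (s ^ norm (1 : FreeGroup (Fin d))) ≤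
            2 ^ p * s ^ p / s := by
        intro l
        rw [FreeGroup.norm_one, pow_zero, mul_one]
        rw [le_div_iff₀ hs0]
        have hnorm : norm (FreeGroup.mk [l] * (1 : FreeGroup (Fin d))) = 1 := by
          rw [mul_one, norm_def, toWord_mk, reduce_singleton, List.length_singleton]
        have := ih (FreeGroup.mk [l] * 1)
        rw [hnorm, pow_one] at this
        exact this
      calc ∑ l : Fin d × Bool, (wordCount d p (FreeGroup.mk [l] * 1) : ℝ) *
              s ^ norm (1 : FreeGroup (Fin d))
          ≤ ∑ _l : Fin d × Bool, (2 ^ p * s ^ p / s) := Finset.sum_le_sum fun l _ => hb l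
        _ = (2 * d : ℝ) * (2 ^ p * s ^ p / s) := by
            rw [Finset.sum_const]
            simp only [Finset.card_univ, Fintype.card_prod, Fintype.card_fin, Fintype.card_bool,
              nsmul_eq_mul]
            push_cast
            ring
        _ ≤ 2 ^ (p + 1) * s ^ (p + 1) := by
            have h2d : (2 * d : ℝ) ≤ 2 * (s * s) := by
              rw [hssq]
              have : (1 : ℝ) ≤ (d : ℝ) := by exact_mod_cast hd
              linarith
            have hB : (0 : ℝ) ≤ 2 ^ p * s ^ p / s := by positivity
            calc (2 * d : ℝ) * (2 ^ p * s ^ p / s)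
                ≤ 2 * (s * s) * (2 ^ p * s ^ p / s) := mul_le_mul_of_nonneg_right h2d hB
              _ = 2 ^ (p + 1) * s ^ (p + 1) := by
                  field_simp
                  ring
    · -- x ≠ 1
      obtain ⟨b, t, hbt⟩ := List.exists_cons_of_ne_nil (mt toWord_eq_nil_iff.1 hx)
      set l₀ : Fin d × Bool := (b.1, !b.2) with hl₀
      have hcancel : norm (FreeGroup.mk [l₀] * x) + 1 = norm x := by
        apply norm_letter_mul_cancel
        rw [hbt]
        congr 1
        simp [hl₀]
      have hup : ∀ l : Fin d × Bool, l ≠ l₀ → norm (FreeGroup.mk [l] * x) = norm x + 1 := by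
        intro l hl
        apply norm_letter_mul_of_head
        intro c hc
        rw [hbt] at hc
        simp only [List.head?_cons, Option.mem_some_iff] at hc
        subst hc
        intro hcan
        rw [canc_iff] at hcan
        refine hl ?_
        rw [hl₀, hcan]
        simp
      rw [← Finset.sum_erase_add _ _ (Finset.mem_univ l₀)]
      have hterm0 : (wordCount d p (FreeGroup.mk [l₀] * x) : ℝ) * s ^ norm x ≤
          2 ^ p * s ^ p * s := by
        have := ih (FreeGroup.mk [l₀] * x)
        calc (wordCount d p (FreeGroup.mk [l₀] * x) : ℝ) * s ^ norm x
            = ((wordCount d p (FreeGroup.mk [l₀] * x) : ℝ) *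
                s ^ (norm (FreeGroup.mk [l₀] * x))) * s := by
              rw [← hcancel, pow_succ]; ring
          _ ≤ 2 ^ p * s ^ p * s := by
              apply mul_le_mul_of_nonneg_right this (le_of_lt hs0)
      have hterm : ∀ l ∈ Finset.univ.erase l₀,
          (wordCount d p (FreeGroup.mk [l] * x) : ℝ) * s ^ norm x ≤ 2 ^ p * s ^ p / s := by
        intro l hl
        have hne := Finset.ne_of_mem_erase hl
        have hn := hup l hne
        rw [le_div_iff₀ hs0]
        have := ih (FreeGroup.mk [l] * x)
        rw [hn, pow_succ] at this
        calc (wordCount d p (FreeGroup.mk [l] * x) : ℝ) * s ^ norm x * s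
            = (wordCount d p (FreeGroup.mk [l] * x) : ℝ) * (s ^ norm x * s) := by ring
          _ ≤ 2 ^ p * s ^ p := this
      have hcard : (Finset.univ.erase l₀).card = 2 * d - 1 := by
        rw [Finset.card_erase_of_mem (Finset.mem_univ _), Finset.card_univ]
        simp [Fintype.card_prod]
        omega
      calc (∑ l ∈ Finset.univ.erase l₀, (wordCount d p (FreeGroup.mk [l] * x) : ℝ) * s ^ norm x)
            + (wordCount d p (FreeGroup.mk [l₀] * x) : ℝ) * s ^ norm x
          ≤ (∑ _l ∈ Finset.univ.erase l₀, (2 ^ p * s ^ p / s)) + 2 ^ p * s ^ p * s := by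
            apply add_le_add (Finset.sum_le_sum hterm) hterm0
        _ = ((2 * d : ℝ) - 1) * (2 ^ p * s ^ p / s) + 2 ^ p * s ^ p * s := by
            rw [Finset.sum_const, hcard, nsmul_eq_mul]
            have h1d : 1 ≤ 2 * d := by omega
            congr 1
            congr 1
            push_cast [Nat.cast_sub h1d]
            ring
        _ = (s * s) * (2 ^ p * s ^ p / s) + 2 ^ p * s ^ p * s := by rw [hssq]
        _ = 2 ^ (p + 1) * s ^ (p + 1) := by
            field_simp
            ring

/-! ### Decomposition into a cyclically reduced core -/

lemma invRev_cons (b : Fin d × Bool) (u : List (Fin d × Bool)) :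
    invRev (b :: u) = invRev u ++ [(b.1, !b.2)] := by
  simp [invRev]

theorem exists_decomp : ∀ (n : ℕ) (x : FreeGroup (Fin d)), norm x = n → x ≠ 1 →
    ∃ u w : List (Fin d × Bool), w ≠ [] ∧
      (∀ a ∈ w.getLast?, ∀ b ∈ w.head?, ¬ Canc a b) ∧
      x.toWord = u ++ (w ++ invRev u) := by
  intro n
  induction n using Nat.strong_induction_on with
  | _ n ih =>
  intro x hn hx
  have hW : x.toWord ≠ [] := fun h => hx (toWord_eq_nil_iff.1 h)
  have hred : IsRed x.toWord := isRed_toWord x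
  obtain ⟨b, t, hbt⟩ := List.exists_cons_of_ne_nil hW
  obtain ⟨lst, hlst⟩ : ∃ lst, x.toWord.getLast? = some lst :=
    ⟨_, List.getLast?_eq_getLast_of_ne_nil hW⟩
  by_cases hc : Canc lst b
  · -- strip a conjugating letter
    have ht : t ≠ [] := by
      rintro rfl
      rw [hbt] at hlst
      simp only [List.getLast?_singleton, Option.some.injEq] at hlst
      rw [← hlst] at hc
      exact absurd hc.2 (by simp)
    obtain ⟨mid, lst', hml⟩ : ∃ mid lst', t = mid ++ [lst'] :=
      ⟨t.dropLast, t.getLast ht, (List.dropLast_append_getLast ht).symm⟩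
    have hWsplit : x.toWord = (b :: mid) ++ [lst'] := by rw [hbt, hml]; rfl
    have hlsteq : lst' = lst := by
      rw [hWsplit, List.getLast?_append_cons] at hlst
      simpa using hlst
    subst hlsteq
    have hmidne : mid ≠ [] := by
      rintro rfl
      simp only [List.cons_append, List.nil_append] at hWsplit
      have hnc : ¬ Canc b lst' := by
        have h2 := hred
        rw [hWsplit] at h2
        exact (List.isChain_cons_cons.1 h2).1
      exact hnc ⟨hc.1.symm, by rw [hc.2]; simp⟩
    have hmidred : IsRed mid := by
      refine hred.infix ⟨[b], [lst'], ?_⟩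
      rw [hWsplit]
      simp
    have hymid : (FreeGroup.mk mid).toWord = mid := by
      rw [toWord_mk, reduce_eq_self_of_isRed hmidred]
    have hyne : FreeGroup.mk mid ≠ 1 := fun h => hmidne (by rw [← hymid, h, toWord_one])
    have hlen : mid.length < n := by
      have h1 : x.toWord.length = n := hn
      rw [hWsplit] at h1
      simp only [List.length_append, List.length_cons, List.length_singleton] at h1
      omega
    obtain ⟨u', w, hw, hcyc, hdec⟩ :=
      ih mid.length hlen (FreeGroup.mk mid) (by rw [norm_def, hymid]) hyne
    rw [hymid] at hdec
    refine ⟨b :: u', w, hw, hcyc, ?_⟩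
    have hlst'eq : lst' = (b.1, !b.2) := Prod.ext hc.1 hc.2
    rw [hWsplit, hdec, invRev_cons, hlst'eq]
    simp [List.append_assoc]
  · -- already cyclically reduced
    refine ⟨[], x.toWord, hW, ?_, by simp⟩
    intro a ha b' hb'
    rw [hlst] at ha
    rw [hbt] at hb'
    simp only [Option.mem_some_iff, List.head?_cons] at ha hb'
    subst ha
    subst hb'
    exact hc

/-! ### Norm of powers of a conjugated cyclically reduced word -/

lemma head?_flat (w : List (Fin d × Bool)) (hw : w ≠ []) (k : ℕ) :
    (List.replicate (k + 1) w).flatten.head? = w.head? := by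
  rw [List.replicate_succ, List.flatten_cons, List.head?_append_of_ne_nil _ hw]

lemma flat_ne_nil (w : List (Fin d × Bool)) (hw : w ≠ []) (k : ℕ) :
    (List.replicate (k + 1) w).flatten ≠ [] := by
  rw [List.replicate_succ, List.flatten_cons]
  intro h
  exact hw (List.append_eq_nil_iff.1 h).1

lemma getLast?_flat (w : List (Fin d × Bool)) (hw : w ≠ []) :
    ∀ k : ℕ, (List.replicate (k + 1) w).flatten.getLast? = w.getLast? := by
  intro k
  induction k with
  | zero => simp
  | succ k ihk =>
    rw [List.replicate_succ, List.flatten_cons,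
      List.getLast?_append_of_ne_nil _ (flat_ne_nil w hw k), ihk]

lemma chain'_flat (w : List (Fin d × Bool)) (hwred : IsRed w)
    (hcyc : ∀ a ∈ w.getLast?, ∀ b ∈ w.head?, ¬ Canc a b) :
    ∀ k : ℕ, IsRed (List.replicate k w).flatten := by
  intro k
  induction k with
  | zero => exact List.isChain_nil
  | succ k ihk =>
    rw [List.replicate_succ, List.flatten_cons]
    refine List.isChain_append.2 ⟨hwred, ihk, ?_⟩
    intro a ha b hb
    cases k with
    | zero => simp at hb
    | succ k =>
      rw [head?_flat w (by rintro rfl; simp at ha) k] at hb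
      exact hcyc a ha b hb

lemma length_flat (w : List (Fin d × Bool)) (k : ℕ) :
    (List.replicate k w).flatten.length = k * w.length := by
  rw [List.length_flatten, List.map_replicate, List.sum_replicate, smul_eq_mul]

theorem norm_pow_decomp (u w : List (Fin d × Bool)) (hw : w ≠ [])
    (hcyc : ∀ a ∈ w.getLast?, ∀ b ∈ w.head?, ¬ Canc a b)
    (hred : IsRed (u ++ (w ++ invRev u))) (k : ℕ) (hk : 1 ≤ k) :
    norm ((FreeGroup.mk u * FreeGroup.mk w * (FreeGroup.mk u)⁻¹) ^ k) =
      2 * u.length + k * w.length := by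
  obtain ⟨k, rfl⟩ : ∃ k', k = k' + 1 := ⟨k - 1, by omega⟩
  -- decompose the reducedness hypothesis
  have h1 := List.isChain_append.1 hred
  have hu : List.Chain' (fun a b => ¬ Canc a b) u := h1.1
  have h2 := List.isChain_append.1 h1.2.1
  have hwred : IsRed w := h2.1
  have hinv : List.Chain' (fun a b => ¬ Canc a b) (invRev u) := h2.2.1
  have hjwu : ∀ a ∈ w.getLast?, ∀ b ∈ (invRev u).head?, ¬ Canc a b := h2.2.2
  have hjuw : ∀ a ∈ u.getLast?, ∀ b ∈ w.head?, ¬ Canc a b := by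
    intro a ha b hb
    refine h1.2.2 a ha b ?_
    rw [List.head?_append_of_ne_nil _ hw]
    exact hb
  -- the word representing the power
  set F := (List.replicate (k + 1) w).flatten with hF
  have hxk : (FreeGroup.mk u * FreeGroup.mk w * (FreeGroup.mk u)⁻¹) ^ (k + 1) =
      FreeGroup.mk (u ++ (F ++ invRev u)) := by
    rw [conj_pow, pow_mk, inv_mk, mul_mk, mul_mk, hF, List.append_assoc]
  have hredF : IsRed (u ++ (F ++ invRev u)) := by
    refine List.isChain_append.2 ⟨hu, ?_, ?_⟩
    · refine List.isChain_append.2 ⟨chain'_flat w hwred hcyc (k + 1), hinv, ?_⟩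
      intro a ha b hb
      rw [hF, getLast?_flat w hw k] at ha
      exact hjwu a ha b hb
    · intro a ha b hb
      rw [List.head?_append_of_ne_nil _ (flat_ne_nil w hw k)] at hb
      rw [head?_flat w hw k] at hb
      exact hjuw a ha b hb
  rw [hxk, norm_def, toWord_mk, reduce_eq_self_of_isRed hredF]
  simp only [List.length_append, invRev_length, hF, length_flat]
  ring

/-! ### Counting elements of given norm -/

lemma finite_norm_le (d J : ℕ) : {x : FreeGroup (Fin d) | norm x ≤ J}.Finite := by
  have h : {x : FreeGroup (Fin d) | norm x ≤ J} ⊆ toWord ⁻¹' {l | l.length ≤ J} :=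
    fun x hx => hx
  exact ((List.finite_length_le _ J).preimage toWord_injective.injOn).subset h

lemma finite_norm_eq (d j : ℕ) : {x : FreeGroup (Fin d) | norm x = j}.Finite :=
  (finite_norm_le d j).subset fun _ hx => le_of_eq hx

/-- The number of elements of `F_d` of norm `j`. -/
def normCount (d j : ℕ) : ℕ := ((finite_norm_eq d j).toFinset).card

lemma normCount_zero (d : ℕ) : normCount d 0 = 1 := by
  unfold normCount
  have : (finite_norm_eq d 0).toFinset = {1} := by
    ext x
    simp [Set.Finite.mem_toFinset, FreeGroup.norm_eq_zero]
  rw [this, Finset.card_singleton]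

lemma normCount_one_le (d : ℕ) (hd : 1 ≤ d) : normCount d 1 ≤ 2 * d := by
  classical
  unfold normCount
  have hcard : ((Finset.univ : Finset (Fin d × Bool))).card = 2 * d := by
    simp [Fintype.card_prod]
    omega
  rw [← hcard]
  apply Finset.card_le_card_of_injOn
    (fun x => x.toWord.head?.getD (⟨0, hd⟩, false)) (fun _ _ => Finset.mem_univ _)
  intro x hx y hy hxy
  simp only [Finset.mem_coe, Set.Finite.mem_toFinset] at hx hy
  obtain ⟨a, hax⟩ := List.length_eq_one_iff.1 (hx : x.toWord.length = 1)
  obtain ⟨b, hby⟩ := List.length_eq_one_iff.1 (hy : y.toWord.length = 1)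
  simp only [hax, hby, List.head?_cons, Option.getD_some] at hxy
  rw [← mk_toWord (x := x), ← mk_toWord (x := y), hax, hby, hxy]

lemma normCount_succ_le (d : ℕ) (hd : 1 ≤ d) (j : ℕ) (hj : 1 ≤ j) :
    normCount d (j + 1) ≤ normCount d j * (2 * d - 1) := by
  classical
  unfold normCount
  set dflt : Fin d × Bool := (⟨0, hd⟩, false) with hdflt
  set c : FreeGroup (Fin d) → Fin d × Bool := fun y => y.toWord.head?.getD dflt with hc
  set g : FreeGroup (Fin d) → FreeGroup (Fin d) × (Fin d × Bool) :=
    fun x => (FreeGroup.mk x.toWord.tail, c x) with hg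
  set Sj := (finite_norm_eq d j).toFinset with hSj
  set T : Finset (FreeGroup (Fin d) × (Fin d × Bool)) :=
    Sj.biUnion (fun y => {y} ×ˢ (Finset.univ.erase ((c y).1, !(c y).2))) with hT
  -- basic facts about elements of norm j+1
  have hfact : ∀ x : FreeGroup (Fin d), norm x = j + 1 →
      x.toWord = c x :: (FreeGroup.mk x.toWord.tail).toWord ∧
      norm (FreeGroup.mk x.toWord.tail) = j ∧
      c x ≠ ((c (FreeGroup.mk x.toWord.tail)).1, !(c (FreeGroup.mk x.toWord.tail)).2) := by
    intro x hx
    have hWne : x.toWord ≠ [] := by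
      intro h
      rw [norm_def, h] at hx
      simp at hx
    obtain ⟨b, t, hbt⟩ := List.exists_cons_of_ne_nil hWne
    have hcx : c x = b := by
      simp only [hc, hbt, List.head?_cons, Option.getD_some]
    have htred : IsRed t := by
      have := isRed_toWord x
      rw [hbt] at this
      exact this.tail
    have httw : (FreeGroup.mk t).toWord = t := by
      rw [toWord_mk, reduce_eq_self_of_isRed htred]
    have htail : x.toWord.tail = t := by rw [hbt]; rfl
    have hnt : norm (FreeGroup.mk x.toWord.tail) = j := by
      rw [htail, norm_def, httw]
      have : x.toWord.length = j + 1 := hx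
      rw [hbt] at this
      simp only [List.length_cons] at this
      omega
    have htne : t ≠ [] := by
      intro h
      rw [htail, h] at hnt
      rw [norm_def, toWord_mk] at hnt
      simp at hnt
      omega
    obtain ⟨e, t', het⟩ := List.exists_cons_of_ne_nil htne
    have hce : c (FreeGroup.mk x.toWord.tail) = e := by
      simp only [hc]
      rw [htail, httw, het]
      rfl
    refine ⟨by rw [hcx, htail, httw, hbt], hnt, ?_⟩
    have hnc : ¬ Canc b e := by
      have := isRed_toWord x
      rw [hbt, het] at this
      exact (List.isChain_cons_cons.1 this).1
    rw [hcx, hce]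
    intro hbe
    exact hnc ⟨by rw [hbe], by rw [hbe]⟩
  -- counting
  have hinj : Set.InjOn g (finite_norm_eq d (j + 1)).toFinset := by
    intro x hx y hy hxy
    simp only [Finset.mem_coe, Set.Finite.mem_toFinset] at hx hy
    obtain ⟨hx1, _, _⟩ := hfact x hx
    obtain ⟨hy1, _, _⟩ := hfact y hy
    have h1 : c x = c y := congrArg Prod.snd hxy
    have h2 : FreeGroup.mk x.toWord.tail = FreeGroup.mk y.toWord.tail :=
      congrArg Prod.fst hxy
    have h3 : FreeGroup.mk x.toWord = FreeGroup.mk y.toWord := by rw [hx1, hy1, h1, h2]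
    rwa [mk_toWord, mk_toWord] at h3
  calc (finite_norm_eq d (j + 1)).toFinset.card
      = ((finite_norm_eq d (j + 1)).toFinset.image g).card :=
        (Finset.card_image_of_injOn hinj).symm
    _ ≤ T.card := by
        apply Finset.card_le_card
        intro z hz
        rw [Finset.mem_image] at hz
        obtain ⟨x, hx, rfl⟩ := hz
        rw [Set.Finite.mem_toFinset] at hx
        obtain ⟨hx1, hx2, hx3⟩ := hfact x hx
        rw [hT, Finset.mem_biUnion]
        refine ⟨FreeGroup.mk x.toWord.tail, ?_, ?_⟩
        · rw [hSj, Set.Finite.mem_toFinset]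
          exact hx2
        · rw [Finset.mem_product]
          exact ⟨Finset.mem_singleton_self _, Finset.mem_erase.2 ⟨hx3, Finset.mem_univ _⟩⟩
    _ ≤ ∑ y ∈ Sj, ({y} ×ˢ (Finset.univ.erase ((c y).1, !(c y).2))).card :=
        Finset.card_biUnion_le
    _ = Sj.card * (2 * d - 1) := by
        have hcard2 : ∀ y : FreeGroup (Fin d),
            ({y} ×ˢ (Finset.univ.erase ((c y).1, !(c y).2))).card = 2 * d - 1 := by
          intro y
          rw [Finset.card_product, Finset.card_singleton, one_mul,
            Finset.card_erase_of_mem (Finset.mem_univ _), Finset.card_univ]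
          have hcp : Fintype.card (Fin d × Bool) = 2 * d := by
            rw [Fintype.card_prod, Fintype.card_bool, Fintype.card_fin]
            omega
          omega
        rw [Finset.sum_congr rfl (fun y _ => hcard2 y), Finset.sum_const, smul_eq_mul]

lemma normCount_le (d : ℕ) (hd : 1 ≤ d) : ∀ j, normCount d j ≤ 2 * (2 * d - 1) ^ j := by
  intro j
  induction j with
  | zero => rw [normCount_zero, pow_zero]; omega
  | succ j ih =>
    cases j with
    | zero =>
      have h1 := normCount_one_le d hd
      show normCount d 1 ≤ 2 * (2 * d - 1) ^ 1
      rw [pow_one]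
      omega
    | succ j =>
      calc normCount d (j + 1 + 1) ≤ normCount d (j + 1) * (2 * d - 1) :=
            normCount_succ_le d hd (j + 1) (by omega)
        _ ≤ 2 * (2 * d - 1) ^ (j + 1) * (2 * d - 1) := Nat.mul_le_mul_right _ ih
        _ = 2 * (2 * d - 1) ^ (j + 1 + 1) := by ring

end Aux
end SC


namespace SC
open Aux FreeGroup

/-- **Friedman's counting bound (Lemma 8.3).** For every `d ≥ 2`, `k ≥ 2` and `p ≥ 1`:
`Σ_{v ∈ F_d^{np}} #{(i_1,…,i_p) ∈ {1,…,2d}^p : g_{i_1}⋯g_{i_p} = v^k}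
  ≤ (p+1)^4 (2√(2d−1))^p`. -/
theorem nonpower_word_count_bound (d k p : ℕ) (hd : 2 ≤ d) (hk : 2 ≤ k) (hp : 1 ≤ p) :
    ∑' v : {v : FreeGroup (Fin d) // NonPower v},
        (wordCount d p ((v : FreeGroup (Fin d)) ^ k) : ℝ) ≤
      ((p : ℝ) + 1) ^ 4 * (2 * Real.sqrt (2 * (d : ℝ) - 1)) ^ p := by
  classical
  have hd1 : 1 ≤ d := by omega
  set s : ℝ := Real.sqrt (2 * (d : ℝ) - 1) with hsdef
  have hs1 : 1 ≤ s := sqrt_ge_one hd1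
  have hs0 : 0 < s := lt_of_lt_of_le one_pos hs1
  have hq : s * s = 2 * (d : ℝ) - 1 := sq_sqrt' hd1
  -- choose decompositions
  have hdec : ∀ v : FreeGroup (Fin d), ¬ v = 1 → ∃ u w : List (Fin d × Bool), w ≠ [] ∧
      (∀ a ∈ w.getLast?, ∀ b ∈ w.head?, ¬ Canc a b) ∧
      v.toWord = u ++ (w ++ FreeGroup.invRev u) := fun v hv => exists_decomp _ v rfl hv
  set uOf : FreeGroup (Fin d) → List (Fin d × Bool) := fun v =>
    if h : v = 1 then [] else (hdec v h).choose with huOf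
  set wOf : FreeGroup (Fin d) → List (Fin d × Bool) := fun v =>
    if h : v = 1 then [] else ((hdec v h).choose_spec).choose with hwOf
  have hspec : ∀ v : FreeGroup (Fin d), v ≠ 1 →
      wOf v ≠ [] ∧ (∀ a ∈ (wOf v).getLast?, ∀ b ∈ (wOf v).head?, ¬ Canc a b) ∧
      v.toWord = uOf v ++ (wOf v ++ FreeGroup.invRev (uOf v)) := by
    intro v h
    simp only [huOf, hwOf, dif_neg h]
    exact ((hdec v h).choose_spec).choose_spec
  -- basic consequences of the decomposition
  have hfacts : ∀ v : FreeGroup (Fin d), v ≠ 1 →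
      1 ≤ (wOf v).length ∧
      norm (v ^ k) = 2 * (uOf v).length + k * (wOf v).length ∧
      (FreeGroup.mk (uOf v ++ wOf v)).toWord = uOf v ++ wOf v := by
    intro v hv
    obtain ⟨hw, hcyc, htw⟩ := hspec v hv
    have hred : IsRed (uOf v ++ (wOf v ++ FreeGroup.invRev (uOf v))) := by
      rw [← htw]; exact isRed_toWord v
    have hveq : v = FreeGroup.mk (uOf v) * FreeGroup.mk (wOf v) * (FreeGroup.mk (uOf v))⁻¹ := by
      rw [FreeGroup.inv_mk, FreeGroup.mul_mk, FreeGroup.mul_mk]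
      conv_lhs => rw [← FreeGroup.mk_toWord (x := v)]
      rw [htw, List.append_assoc]
    refine ⟨?_, ?_, ?_⟩
    · have := List.length_pos_iff.2 hw
      omega
    · conv_lhs => rw [hveq]
      exact norm_pow_decomp _ _ hw hcyc hred k (by omega)
    · rw [FreeGroup.toWord_mk]
      apply reduce_eq_self_of_isRed
      refine hred.prefix ?_
      rw [← List.append_assoc]
      exact List.prefix_append _ _
  have hnormv : ∀ v : FreeGroup (Fin d), v ≠ 1 → norm v ≤ norm (v ^ k) := by
    intro v hv
    obtain ⟨hw1, hnk, _⟩ := hfacts v hv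
    obtain ⟨_, _, htw⟩ := hspec v hv
    have : norm v = 2 * (uOf v).length + (wOf v).length := by
      rw [norm_def, htw]
      simp only [List.length_append, FreeGroup.invRev_length]
      ring
    have hkl : (wOf v).length ≤ k * (wOf v).length := Nat.le_mul_of_pos_left _ (by omega)
    omega
  -- the finite support
  set A : Set {v : FreeGroup (Fin d) // NonPower v} := {v | norm ((v : FreeGroup (Fin d)) ^ k) ≤ p}
    with hA
  have hAfin : A.Finite := by
    have hsub : A ⊆ Subtype.val ⁻¹' {x : FreeGroup (Fin d) | norm x ≤ p} := by
      intro v hv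
      exact le_trans (hnormv v.val v.2.1) hv
    exact (((finite_norm_le d p)).preimage (Subtype.val_injective.injOn)).subset hsub
  set s₀ : Finset {v : FreeGroup (Fin d) // NonPower v} := hAfin.toFinset with hs₀
  have htsum : ∑' v : {v : FreeGroup (Fin d) // NonPower v},
      (wordCount d p ((v : FreeGroup (Fin d)) ^ k) : ℝ)
      = ∑ v ∈ s₀, (wordCount d p ((v : FreeGroup (Fin d)) ^ k) : ℝ) := by
    apply tsum_eq_sum
    intro v hv
    have hnle : ¬ norm ((v : FreeGroup (Fin d)) ^ k) ≤ p := by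
      intro hle
      exact hv (by rw [hs₀, Set.Finite.mem_toFinset]; exact hle)
    rw [wordCount_eq_zero_of_lt d p _ (by omega)]
    simp
  rw [htsum]
  -- the encoding map and the weight function
  set Φ : {v : FreeGroup (Fin d) // NonPower v} → ℕ × FreeGroup (Fin d) := fun v =>
    ((uOf (v : FreeGroup (Fin d))).length,
      FreeGroup.mk (uOf (v : FreeGroup (Fin d)) ++ wOf (v : FreeGroup (Fin d)))) with hΦ
  set g : ℕ × FreeGroup (Fin d) → ℝ := fun t => 2 ^ p * s ^ p * ((s * s) ^ (norm t.2))⁻¹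
    with hg
  have hg0 : ∀ t, 0 ≤ g t := by
    intro t
    simp only [hg]
    positivity
  set Mf : Finset (FreeGroup (Fin d)) := (finite_norm_le d p).toFinset with hMf
  -- pointwise bound and membership
  have hpoint : ∀ v ∈ s₀, (wordCount d p ((v : FreeGroup (Fin d)) ^ k) : ℝ) ≤ g (Φ v) ∧
      Φ v ∈ (Finset.range (p + 1)) ×ˢ Mf := by
    intro v hv
    have hv1 : (v : FreeGroup (Fin d)) ≠ 1 := v.2.1
    have hnp : norm ((v : FreeGroup (Fin d)) ^ k) ≤ p := by
      rw [hs₀, Set.Finite.mem_toFinset] at hv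
      exact hv
    obtain ⟨hw1, hnk, htwuw⟩ := hfacts v.val hv1
    set a := (uOf (v : FreeGroup (Fin d))).length
    set l := (wOf (v : FreeGroup (Fin d))).length
    have hjn : norm (Φ v).2 = a + l := by
      simp only [hΦ]
      rw [norm_def, htwuw, List.length_append]
    have h2j : 2 * (a + l) ≤ norm ((v : FreeGroup (Fin d)) ^ k) := by
      rw [hnk]
      have : 2 * l ≤ k * l := Nat.mul_le_mul_right _ hk
      omega
    constructor
    · -- the weight bound
      have hW := lemmaW hd1 p ((v : FreeGroup (Fin d)) ^ k)
      have hssj : (s * s) ^ (norm (Φ v).2) ≤ s ^ (norm ((v : FreeGroup (Fin d)) ^ k)) := by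
        rw [← pow_two, ← pow_mul]
        apply pow_le_pow_right₀ hs1
        rw [hjn]
        omega
      have hpos : (0 : ℝ) < (s * s) ^ (norm (Φ v).2) := by positivity
      rw [hg]
      simp only
      rw [← div_eq_mul_inv, le_div_iff₀ hpos]
      calc (wordCount d p ((v : FreeGroup (Fin d)) ^ k) : ℝ) * (s * s) ^ (norm (Φ v).2)
          ≤ (wordCount d p ((v : FreeGroup (Fin d)) ^ k) : ℝ) *
              s ^ (norm ((v : FreeGroup (Fin d)) ^ k)) := by
            apply mul_le_mul_of_nonneg_left hssj (Nat.cast_nonneg _)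
        _ ≤ 2 ^ p * s ^ p := hW
    · -- membership
      rw [Finset.mem_product]
      constructor
      · rw [Finset.mem_range]
        show (uOf (v : FreeGroup (Fin d))).length < p + 1
        omega
      · show FreeGroup.mk (uOf (v : FreeGroup (Fin d)) ++ wOf (v : FreeGroup (Fin d))) ∈ Mf
        rw [hMf, Set.Finite.mem_toFinset, Set.mem_setOf_eq]
        have : FreeGroup.norm (FreeGroup.mk (uOf (v : FreeGroup (Fin d)) ++ wOf (v : FreeGroup (Fin d)))) = a + l := hjn
        omega
  -- injectivity of the encoding on s₀
  have hinj : ∀ v₁ ∈ s₀, ∀ v₂ ∈ s₀, Φ v₁ = Φ v₂ → v₁ = v₂ := by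
    intro v₁ _ v₂ _ hΦeq
    have h1 : (v₁ : FreeGroup (Fin d)) ≠ 1 := v₁.2.1
    have h2 : (v₂ : FreeGroup (Fin d)) ≠ 1 := v₂.2.1
    obtain ⟨_, _, htw1⟩ := hfacts v₁.val h1
    obtain ⟨_, _, htw2⟩ := hfacts v₂.val h2
    have ha : (uOf (v₁ : FreeGroup (Fin d))).length = (uOf (v₂ : FreeGroup (Fin d))).length :=
      congrArg Prod.fst hΦeq
    have hmk : FreeGroup.mk (uOf (v₁ : FreeGroup (Fin d)) ++ wOf (v₁ : FreeGroup (Fin d)))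
        = FreeGroup.mk (uOf (v₂ : FreeGroup (Fin d)) ++ wOf (v₂ : FreeGroup (Fin d))) :=
      congrArg Prod.snd hΦeq
    have happ : uOf (v₁ : FreeGroup (Fin d)) ++ wOf (v₁ : FreeGroup (Fin d))
        = uOf (v₂ : FreeGroup (Fin d)) ++ wOf (v₂ : FreeGroup (Fin d)) := by
      rw [← htw1, ← htw2, hmk]
    obtain ⟨hu, hw⟩ := List.append_inj happ ha
    obtain ⟨_, _, hv1tw⟩ := hspec v₁.val h1
    obtain ⟨_, _, hv2tw⟩ := hspec v₂.val h2
    apply Subtype.ext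
    apply FreeGroup.toWord_injective
    rw [hv1tw, hv2tw, hu, hw]
  -- summation
  have hstep1 : ∑ v ∈ s₀, (wordCount d p ((v : FreeGroup (Fin d)) ^ k) : ℝ)
      ≤ ∑ v ∈ s₀, g (Φ v) :=
    Finset.sum_le_sum fun v hv => (hpoint v hv).1
  have hstep2 : ∑ v ∈ s₀, g (Φ v) = ∑ t ∈ s₀.image Φ, g t :=
    (Finset.sum_image hinj).symm
  have hstep3 : ∑ t ∈ s₀.image Φ, g t ≤ ∑ t ∈ (Finset.range (p + 1)) ×ˢ Mf, g t := by
    apply Finset.sum_le_sum_of_subset_of_nonneg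
    · intro t ht
      rw [Finset.mem_image] at ht
      obtain ⟨v, hv, rfl⟩ := ht
      exact (hpoint v hv).2
    · intro t _ _
      exact hg0 t
  -- evaluating the big sum
  have hMfsum : ∑ y ∈ Mf, ((s * s) ^ (norm y))⁻¹ ≤ 2 * ((p : ℝ) + 1) := by
    have hmaps : ∀ y ∈ Mf, norm y ∈ Finset.range (p + 1) := by
      intro y hy
      rw [hMf, Set.Finite.mem_toFinset, Set.mem_setOf_eq] at hy
      rw [Finset.mem_range]
      omega
    rw [← Finset.sum_fiberwise_of_maps_to hmaps]
    have hinner : ∀ j ∈ Finset.range (p + 1),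
        ∑ y ∈ Mf.filter (fun y => FreeGroup.norm y = j), ((s * s) ^ (norm y))⁻¹ ≤ 2 := by
      intro j _
      have hcardle : (Mf.filter (fun y => FreeGroup.norm y = j)).card ≤ normCount d j := by
        apply Finset.card_le_card
        intro y hy
        rw [Finset.mem_filter] at hy
        rw [Set.Finite.mem_toFinset]
        exact hy.2
      calc ∑ y ∈ Mf.filter (fun y => FreeGroup.norm y = j), ((s * s) ^ (norm y))⁻¹
          = ∑ y ∈ Mf.filter (fun y => FreeGroup.norm y = j), ((s * s) ^ j)⁻¹ := by
            apply Finset.sum_congr rfl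
            intro y hy
            rw [Finset.mem_filter] at hy
            rw [hy.2]
        _ = ((Mf.filter (fun y => FreeGroup.norm y = j)).card : ℝ) * ((s * s) ^ j)⁻¹ := by
            rw [Finset.sum_const, nsmul_eq_mul]
        _ ≤ (normCount d j : ℝ) * ((s * s) ^ j)⁻¹ := by
            apply mul_le_mul_of_nonneg_right _ (by positivity)
            exact_mod_cast hcardle
        _ ≤ 2 := by
            have hN := normCount_le d hd1 j
            have hNr : (normCount d j : ℝ) ≤ 2 * (s * s) ^ j := by
              rw [hq]
              have : ((2 * d - 1 : ℕ) : ℝ) = 2 * (d : ℝ) - 1 := by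
                push_cast [Nat.cast_sub (by omega : 1 ≤ 2 * d)]
                ring
              calc (normCount d j : ℝ) ≤ ((2 * (2 * d - 1) ^ j : ℕ) : ℝ) := by exact_mod_cast hN
                _ = 2 * (2 * (d : ℝ) - 1) ^ j := by
                  push_cast [Nat.cast_sub (by omega : 1 ≤ 2 * d)]
                  ring
            have hppos : (0 : ℝ) < (s * s) ^ j := by positivity
            calc (normCount d j : ℝ) * ((s * s) ^ j)⁻¹
                ≤ (2 * (s * s) ^ j) * ((s * s) ^ j)⁻¹ :=
                  mul_le_mul_of_nonneg_right hNr (by positivity)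
              _ = 2 := by field_simp
    calc ∑ j ∈ Finset.range (p + 1), ∑ y ∈ Mf.filter (fun y => FreeGroup.norm y = j),
          ((s * s) ^ (norm y))⁻¹
        ≤ ∑ j ∈ Finset.range (p + 1), (2 : ℝ) := Finset.sum_le_sum hinner
      _ = 2 * ((p : ℝ) + 1) := by
          rw [Finset.sum_const, Finset.card_range, nsmul_eq_mul]
          push_cast
          ring
  have hstep4 : ∑ t ∈ (Finset.range (p + 1)) ×ˢ Mf, g t
      ≤ ((p : ℝ) + 1) * (2 ^ p * s ^ p * (2 * ((p : ℝ) + 1))) := by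
    rw [Finset.sum_product]
    have : ∀ a ∈ Finset.range (p + 1), ∑ y ∈ Mf, g (a, y)
        ≤ 2 ^ p * s ^ p * (2 * ((p : ℝ) + 1)) := by
      intro a _
      have : ∑ y ∈ Mf, g (a, y) = 2 ^ p * s ^ p * ∑ y ∈ Mf, ((s * s) ^ (norm y))⁻¹ := by
        rw [Finset.mul_sum]
      rw [this]
      apply mul_le_mul_of_nonneg_left hMfsum (by positivity)
    calc ∑ a ∈ Finset.range (p + 1), ∑ y ∈ Mf, g (a, y)
        ≤ ∑ _a ∈ Finset.range (p + 1), (2 ^ p * s ^ p * (2 * ((p : ℝ) + 1))) :=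
          Finset.sum_le_sum this
      _ = ((p : ℝ) + 1) * (2 ^ p * s ^ p * (2 * ((p : ℝ) + 1))) := by
          rw [Finset.sum_const, Finset.card_range, nsmul_eq_mul]
          push_cast
          ring
  -- final arithmetic
  have hfinal : ((p : ℝ) + 1) * (2 ^ p * s ^ p * (2 * ((p : ℝ) + 1)))
      ≤ ((p : ℝ) + 1) ^ 4 * (2 * s) ^ p := by
    rw [mul_pow]
    have hp1 : (2 : ℝ) ≤ (p : ℝ) + 1 := by
      have : (1 : ℝ) ≤ (p : ℝ) := by exact_mod_cast hp
      linarith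
    have hB : (0 : ℝ) < 2 ^ p * s ^ p := by positivity
    have hkey : 2 * ((p : ℝ) + 1) ^ 2 ≤ ((p : ℝ) + 1) ^ 4 := by
      have ht : (4 : ℝ) ≤ ((p : ℝ) + 1) ^ 2 := by nlinarith
      nlinarith [ht, sq_nonneg (((p : ℝ) + 1) ^ 2)]
    calc ((p : ℝ) + 1) * (2 ^ p * s ^ p * (2 * ((p : ℝ) + 1)))
        = (2 * ((p : ℝ) + 1) ^ 2) * (2 ^ p * s ^ p) := by ring
      _ ≤ ((p : ℝ) + 1) ^ 4 * (2 ^ p * s ^ p) :=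
          mul_le_mul_of_nonneg_right hkey (le_of_lt hB)
      _ = ((p : ℝ) + 1) ^ 4 * (2 ^ p * s ^ p) := rfl
  calc ∑ v ∈ s₀, (wordCount d p ((v : FreeGroup (Fin d)) ^ k) : ℝ)
      ≤ ∑ v ∈ s₀, g (Φ v) := hstep1
    _ = ∑ t ∈ s₀.image Φ, g t := hstep2
    _ ≤ ∑ t ∈ (Finset.range (p + 1)) ×ˢ Mf, g t := hstep3
    _ ≤ ((p : ℝ) + 1) * (2 ^ p * s ^ p * (2 * ((p : ℝ) + 1))) := hstep4
    _ ≤ ((p : ℝ) + 1) ^ 4 * (2 * s) ^ p := hfinal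


end SC
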